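/- In the diameter lower-bound graph G_{x,y}, for every pair of nodes u, v such that it is not the case that one of u, v lies in A and the other lies in B, the hop distance satisfies dist(u,v) ≤ 4. -/

import Mathlib

inductive DVertex (k logk : ℕ) where
  | a (i : Fin k)
  | b (i : Fin k)
  | fA (h : Fin logk)
  | tA (h : Fin logk)
  | fB (h : Fin logk)
  | tB (h : Fin logk)
  | cA
  | cA'
  | cB
  | cB'
deriving DecidableEq

def dRel (k logk : ℕ) (x y : Fin k → Bool) : DVertex k logk → DVertex k logk → Prop
  | .a i, .fA h => i.val.testBit h.val = false
  | .a i, .tA h => i.val.testBit h.val = true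
  | .b i, .fB h => i.val.testBit h.val = false
  | .b i, .tB h => i.val.testBit h.val = true
  | .fA h, .tB h' => h = h'
  | .tA h, .fB h' => h = h'
  | .a _, .cA => True
  | .b _, .cB => True
  | .fA _, .cA' => True
  | .tA _, .cA' => True
  | .fB _, .cB' => True
  | .tB _, .cB' => True
  | .cA, .cA' => True
  | .cB, .cB' => True
  | .cA', .cB' => True
  | .a i, .cA' => x i = false
  | .b i, .cB' => y i = false
  | _, _ => False

def dGraph (k logk : ℕ) (x y : Fin k → Bool) : SimpleGraph (DVertex k logk) :=
  SimpleGraph.fromRel (dRel k logk x y)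

section aux
variable {k logk : ℕ} {x y : Fin k → Bool}

lemma dAdj {u v : DVertex k logk} (hne : u ≠ v) (hr : dRel k logk x y u v) :
    (dGraph k logk x y).Adj u v := by
  rw [dGraph, SimpleGraph.fromRel_adj]; exact ⟨hne, Or.inl hr⟩

lemma adj_a_cA (i : Fin k) : (dGraph k logk x y).Adj (.a i) (.cA : DVertex k logk) :=
  dAdj nofun trivial
lemma adj_b_cB (i : Fin k) : (dGraph k logk x y).Adj (.b i) (.cB : DVertex k logk) :=
  dAdj nofun trivial
lemma adj_cA_cA' : (dGraph k logk x y).Adj (.cA : DVertex k logk) .cA' :=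
  dAdj nofun trivial
lemma adj_cB_cB' : (dGraph k logk x y).Adj (.cB : DVertex k logk) .cB' :=
  dAdj nofun trivial
lemma adj_fA_cA' (h : Fin logk) : (dGraph k logk x y).Adj (.fA h) (.cA' : DVertex k logk) :=
  dAdj nofun trivial
lemma adj_tA_cA' (h : Fin logk) : (dGraph k logk x y).Adj (.tA h) (.cA' : DVertex k logk) :=
  dAdj nofun trivial
lemma adj_fB_cB' (h : Fin logk) : (dGraph k logk x y).Adj (.fB h) (.cB' : DVertex k logk) :=
  dAdj nofun trivial
lemma adj_tB_cB' (h : Fin logk) : (dGraph k logk x y).Adj (.tB h) (.cB' : DVertex k logk) :=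
  dAdj nofun trivial
lemma adj_cA'_cB' : (dGraph k logk x y).Adj (.cA' : DVertex k logk) .cB' :=
  dAdj nofun trivial

def dA {k logk : ℕ} : DVertex k logk → ℕ∞
  | .a _ => 2 | .b _ => 3 | .fA _ => 1 | .tA _ => 1 | .fB _ => 2 | .tB _ => 2
  | .cA => 1 | .cA' => 0 | .cB => 2 | .cB' => 1

def dB {k logk : ℕ} : DVertex k logk → ℕ∞
  | .a _ => 3 | .b _ => 2 | .fA _ => 2 | .tA _ => 2 | .fB _ => 1 | .tB _ => 1
  | .cA => 2 | .cA' => 1 | .cB => 1 | .cB' => 0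

lemma hubA (u : DVertex k logk) : (dGraph k logk x y).edist u .cA' ≤ dA u := by
  cases u with
  | a i =>
    refine le_trans (SimpleGraph.edist_le
      (.cons (adj_a_cA i) (.cons adj_cA_cA' .nil))) ?_
    simp [dA]
  | b i =>
    refine le_trans (SimpleGraph.edist_le
      (.cons (adj_b_cB i) (.cons adj_cB_cB' (.cons adj_cA'_cB'.symm .nil)))) ?_
    simp [dA]
  | fA h =>
    refine le_trans (SimpleGraph.edist_le (.cons (adj_fA_cA' h) .nil)) ?_
    simp [dA]
  | tA h =>
    refine le_trans (SimpleGraph.edist_le (.cons (adj_tA_cA' h) .nil)) ?_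
    simp [dA]
  | fB h =>
    refine le_trans (SimpleGraph.edist_le
      (.cons (adj_fB_cB' h) (.cons adj_cA'_cB'.symm .nil))) ?_
    simp [dA]
  | tB h =>
    refine le_trans (SimpleGraph.edist_le
      (.cons (adj_tB_cB' h) (.cons adj_cA'_cB'.symm .nil))) ?_
    simp [dA]
  | cA =>
    refine le_trans (SimpleGraph.edist_le (.cons adj_cA_cA' .nil)) ?_
    simp [dA]
  | cA' => simp [SimpleGraph.edist_self, dA]
  | cB =>
    refine le_trans (SimpleGraph.edist_le
      (.cons adj_cB_cB' (.cons adj_cA'_cB'.symm .nil))) ?_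
    simp [dA]
  | cB' =>
    refine le_trans (SimpleGraph.edist_le (.cons adj_cA'_cB'.symm .nil)) ?_
    simp [dA]

lemma hubB (u : DVertex k logk) : (dGraph k logk x y).edist u .cB' ≤ dB u := by
  cases u with
  | a i =>
    refine le_trans (SimpleGraph.edist_le
      (.cons (adj_a_cA i) (.cons adj_cA_cA' (.cons adj_cA'_cB' .nil)))) ?_
    simp [dB]
  | b i =>
    refine le_trans (SimpleGraph.edist_le
      (.cons (adj_b_cB i) (.cons adj_cB_cB' .nil))) ?_
    simp [dB]
  | fA h =>
    refine le_trans (SimpleGraph.edist_le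
      (.cons (adj_fA_cA' h) (.cons adj_cA'_cB' .nil))) ?_
    simp [dB]
  | tA h =>
    refine le_trans (SimpleGraph.edist_le
      (.cons (adj_tA_cA' h) (.cons adj_cA'_cB' .nil))) ?_
    simp [dB]
  | fB h =>
    refine le_trans (SimpleGraph.edist_le (.cons (adj_fB_cB' h) .nil)) ?_
    simp [dB]
  | tB h =>
    refine le_trans (SimpleGraph.edist_le (.cons (adj_tB_cB' h) .nil)) ?_
    simp [dB]
  | cA =>
    refine le_trans (SimpleGraph.edist_le
      (.cons adj_cA_cA' (.cons adj_cA'_cB' .nil))) ?_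
    simp [dB]
  | cA' =>
    refine le_trans (SimpleGraph.edist_le (.cons adj_cA'_cB' .nil)) ?_
    simp [dB]
  | cB =>
    refine le_trans (SimpleGraph.edist_le (.cons adj_cB_cB' .nil)) ?_
    simp [dB]
  | cB' => simp [SimpleGraph.edist_self, dB]

lemma boundVia (u v : DVertex k logk) (w : DVertex k logk) {m n : ℕ∞}
    (h1 : (dGraph k logk x y).edist u w ≤ m) (h2 : (dGraph k logk x y).edist v w ≤ n)
    (hmn : m + n ≤ 4) : (dGraph k logk x y).edist u v ≤ 4 := by
  refine le_trans (SimpleGraph.edist_triangle (v := w)) (le_trans ?_ hmn)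
  rw [SimpleGraph.edist_comm (u := w)]
  exact add_le_add h1 h2

lemma hubA2 (u : DVertex k logk) (hu : ∀ i, u ≠ .b i) :
    (dGraph k logk x y).edist u .cA' ≤ 2 := by
  refine (hubA u).trans ?_
  cases u with
  | b i => exact absurd rfl (hu i)
  | a _ => simp [dA]
  | fA _ => simp [dA]
  | tA _ => simp [dA]
  | fB _ => simp [dA]
  | tB _ => simp [dA]
  | cA => simp [dA]
  | cA' => simp [dA]
  | cB => simp [dA]
  | cB' => simp [dA]

lemma hubB2 (u : DVertex k logk) (hu : ∀ i, u ≠ .a i) :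
    (dGraph k logk x y).edist u .cB' ≤ 2 := by
  refine (hubB u).trans ?_
  cases u with
  | a i => exact absurd rfl (hu i)
  | b _ => simp [dB]
  | fA _ => simp [dB]
  | tA _ => simp [dB]
  | fB _ => simp [dB]
  | tB _ => simp [dB]
  | cA => simp [dB]
  | cA' => simp [dB]
  | cB => simp [dB]
  | cB' => simp [dB]

lemma bound4 {u v : DVertex k logk} (w : DVertex k logk)
    (h1 : (dGraph k logk x y).edist u w ≤ 2) (h2 : (dGraph k logk x y).edist v w ≤ 2) :
    (dGraph k logk x y).edist u v ≤ 4 := by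
  refine le_trans (SimpleGraph.edist_triangle (v := w)) ?_
  rw [SimpleGraph.edist_comm (u := w)]
  calc (dGraph k logk x y).edist u w + (dGraph k logk x y).edist v w
      ≤ 2 + 2 := add_le_add h1 h2
    _ ≤ 4 := by norm_num

end aux

/-- in `G_{x,y}`, for every pair of nodes `u, v` such that it is not
the case that one of them lies in `A` and the other lies in `B`, `dist(u,v) ≤ 4`. -/
theorem dGraph_dist_le_four (k logk : ℕ) (hk : 2 ≤ k) (hpow : k = 2 ^ logk)
    (x y : Fin k → Bool) (u v : DVertex k logk)
    (h : ¬ (((∃ i, u = DVertex.a i) ∧ (∃ j, v = DVertex.b j)) ∨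
            ((∃ i, v = DVertex.a i) ∧ (∃ j, u = DVertex.b j)))) :
    (dGraph k logk x y).edist u v ≤ 4 := by
  cases u <;> cases v <;>
  first
  | (refine bound4 .cB' (hubB2 _ ?_) (hubB2 _ ?_) <;> (intro _ h; cases h; done))
  | (refine bound4 .cA' (hubA2 _ ?_) (hubA2 _ ?_) <;> (intro _ h; cases h; done))
  | simp at h
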